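/- Let T > 0, 1 < p < ∞, and let u₀ be a minimizer of I_p(v) = (∫₀ᵀ v'²)/(∫₀ᵀ |v|^{2p/(p-1)})^{(p-1)/p} over the nonzero elements of X_p^per = { v ∈ H^1(0,T) : v(0)=v(T), ∫₀ᵀ |v|^{2/(p-1)} v = 0 }, with minimum value m_p. Then u₀ is a weak solution of the Euler–Lagrange problem u₀'' + A_p(u₀)|u₀|^{2/(p-1)} u₀ = 0 with periodic boundary conditions u₀(0)=u₀(T), u₀'(0)=u₀'(T), where A_p(u₀) = m_p (∫₀ᵀ |u₀|^{2p/(p-1)})^{-1/p}. -/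

import Mathlib

open Set MeasureTheory intervalIntegral Filter Topology

set_option maxHeartbeats 1000000


lemma aux_cont_abs_rpow {q : ℝ} (hq : 0 < q) : Continuous fun x : ℝ => |x| ^ q := by
  rw [continuous_iff_continuousAt]
  intro x
  exact (Real.continuousAt_rpow_const _ _ (Or.inr hq.le)).comp continuous_abs.continuousAt

lemma aux_hasDerivAt_F {q : ℝ} (hq : 0 < q) (x : ℝ) :
    HasDerivAt (fun y : ℝ => |y| ^ q * y) ((q + 1) * |x| ^ q) x := by
  rcases lt_trichotomy x 0 with hx | hx | hx
  · have hx' : (0:ℝ) < -x := by linarith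
    have h1 : HasDerivAt (fun y : ℝ => (-y) ^ q) (q * (-x) ^ (q - 1) * (-1)) x :=
      (Real.hasDerivAt_rpow_const (x := -x) (p := q) (Or.inl hx'.ne')).comp x (hasDerivAt_neg x)
    have h2 := h1.mul (hasDerivAt_id x)
    have h3 : HasDerivAt (fun y : ℝ => (-y) ^ q * y) ((q + 1) * |x| ^ q) x := by
      convert h2 using 1 <;> try rfl
      have e1 : (-x) ^ (q - 1) * x = -(-x) ^ q := by
        have : (-x) ^ (q - 1) * (-x) = (-x) ^ q := by
          rw [← Real.rpow_add_one hx'.ne']; ring_nf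
        nlinarith [this]
      rw [abs_of_neg hx]
      rw [id_eq]
      nlinarith [e1]
    apply h3.congr_of_eventuallyEq
    filter_upwards [eventually_lt_nhds hx] with y hy
    rw [abs_of_neg hy]
  · subst hx
    rw [hasDerivAt_iff_tendsto_slope]
    have habs : Tendsto (fun y : ℝ => |y| ^ q) (𝓝[≠] 0) (𝓝 ((q + 1) * |(0:ℝ)| ^ q)) := by
      have h0 : |(0:ℝ)| ^ q = 0 := by
        simp [Real.zero_rpow hq.ne']
      rw [h0, mul_zero]
      have := ((aux_cont_abs_rpow hq).tendsto 0)
      rw [h0] at this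
      exact this.mono_left nhdsWithin_le_nhds
    apply habs.congr'
    filter_upwards [self_mem_nhdsWithin] with y hy
    have hy' : y ≠ 0 := hy
    simp [slope_def_field, div_eq_iff hy']
    field_simp
  · have h1 : HasDerivAt (fun y : ℝ => y ^ q) (q * x ^ (q - 1)) x :=
      Real.hasDerivAt_rpow_const (Or.inl hx.ne')
    have h2 := h1.mul (hasDerivAt_id x)
    have h3 : HasDerivAt (fun y : ℝ => y ^ q * y) ((q + 1) * |x| ^ q) x := by
      convert h2 using 1 <;> try rfl
      have : x ^ (q - 1) * x = x ^ q := by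
        rw [← Real.rpow_add_one hx.ne']; ring_nf
      rw [abs_of_pos hx, id_eq]
      nlinarith [this]
    apply h3.congr_of_eventuallyEq
    filter_upwards [eventually_gt_nhds hx] with y hy
    rw [abs_of_pos hy]

lemma aux_abs_rpow_add_two {q : ℝ} (hq : 0 < q) (x : ℝ) :
    |x| ^ (q + 2) = |x| ^ q * x * x := by
  rcases eq_or_ne x 0 with rfl | hx
  · simp [Real.zero_rpow, hq.ne', (by linarith : q + 2 ≠ 0)]
  · have hax : (0:ℝ) < |x| := abs_pos.2 hx
    rw [Real.rpow_add hax, show ((2:ℝ) = ((2:ℕ):ℝ)) by norm_num, Real.rpow_natCast]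
    rw [pow_two, abs_mul_abs_self]
    ring

lemma aux_hasDerivAt_G {q : ℝ} (hq : 0 < q) (x : ℝ) :
    HasDerivAt (fun y : ℝ => |y| ^ (q + 2)) ((q + 2) * (|x| ^ q * x)) x := by
  have h := (aux_hasDerivAt_F hq x).mul (hasDerivAt_id x)
  have h2 : HasDerivAt (fun y : ℝ => |y| ^ q * y * y) ((q + 2) * (|x| ^ q * x)) x := by
    convert h using 1 <;> try rfl
    rw [id_eq]; ring
  apply h2.congr_of_eventuallyEq
  filter_upwards with y
  rw [aux_abs_rpow_add_two hq]


lemma aux_taylor {K K' : ℝ → ℝ} (hK : ∀ x, HasDerivAt K (K' x) x)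
    {u x y ε : ℝ}
    (hb : ∀ ξ ∈ Set.uIcc x y, |K' ξ - K' u| ≤ ε) :
    |K x - K y - K' u * (x - y)| ≤ ε * |x - y| := by
  have hd : ∀ ξ ∈ Set.uIcc x y,
      HasDerivWithinAt (fun ξ => K ξ - K' u * ξ) (K' ξ - K' u) (Set.uIcc x y) ξ :=
    fun ξ _ => by
      exact (by simpa using ((hK ξ).sub ((hasDerivAt_id ξ).const_mul (K' u))).hasDerivWithinAt :
        HasDerivWithinAt (K - fun y => K' u * y) (K' ξ - K' u) (Set.uIcc x y) ξ)
  have := Convex.norm_image_sub_le_of_norm_hasDerivWithin_le hd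
    (fun ξ hξ => by simpa [Real.norm_eq_abs] using hb ξ hξ) (convex_uIcc x y)
    (Set.right_mem_uIcc) (Set.left_mem_uIcc)
  rw [Real.norm_eq_abs, Real.norm_eq_abs] at this
  calc |K x - K y - K' u * (x - y)|
      = |(K x - K' u * x) - (K y - K' u * y)| := by ring_nf
    _ ≤ ε * |x - y| := this

lemma aux_integral_pos {T : ℝ} (hT : 0 < T) {f : ℝ → ℝ}
    (hf : ContinuousOn f (Set.Icc 0 T)) (h0 : ∀ t ∈ Set.Icc (0:ℝ) T, 0 ≤ f t)
    {t₀ : ℝ} (ht₀ : t₀ ∈ Set.Icc (0:ℝ) T) (hpos : 0 < f t₀) :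
    0 < ∫ t in (0:ℝ)..T, f t := by
  have hev : ∀ᶠ y in 𝓝[Set.Icc (0:ℝ) T] t₀, f t₀ / 2 < f y :=
    (hf t₀ ht₀).eventually (eventually_gt_nhds (half_lt_self hpos))
  rw [Filter.Eventually, Metric.mem_nhdsWithin_iff] at hev
  obtain ⟨δ, hδ, hev'⟩ := hev
  have hev : ∀ y ∈ Set.Icc (0:ℝ) T, dist y t₀ < δ → f t₀ / 2 < f y := by
    intro y hy hd
    exact hev' ⟨Metric.mem_ball.2 hd, hy⟩
  obtain ⟨ht₀0, ht₀T⟩ := ht₀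
  set α := max 0 (t₀ - δ/2) with hα
  set β := min T (t₀ + δ/2) with hβ
  have hαβ : α < β := by
    rw [hα, hβ, lt_min_iff, max_lt_iff, max_lt_iff]
    constructor <;> constructor <;> linarith
  have hsub : Set.Icc α β ⊆ Set.Icc 0 T := by
    intro y hy
    exact ⟨le_trans (le_max_left _ _) hy.1, le_trans hy.2 (min_le_left _ _)⟩
  have hfi : IntervalIntegrable f volume 0 T := by
    apply ContinuousOn.intervalIntegrable
    rwa [Set.uIcc_of_le hT.le]
  have h1 : IntervalIntegrable f volume 0 α :=
    hfi.mono_set (by rw [Set.uIcc_of_le hT.le, Set.uIcc_of_le (le_max_left _ _)]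
                     exact Set.Icc_subset_Icc le_rfl (by rw [hα, max_le_iff]; constructor <;> linarith))
  have h2 : IntervalIntegrable f volume α β :=
    hfi.mono_set (by rw [Set.uIcc_of_le hT.le, Set.uIcc_of_le hαβ.le]; exact hsub)
  have h3 : IntervalIntegrable f volume β T :=
    hfi.mono_set (by
      rw [Set.uIcc_of_le hT.le, Set.uIcc_of_le (min_le_left T (t₀ + δ/2))]
      exact Set.Icc_subset_Icc (le_trans (le_max_left 0 _) hαβ.le) le_rfl)
  have hsplit : (∫ t in (0:ℝ)..T, f t)
      = (∫ t in (0:ℝ)..α, f t) + ((∫ t in α..β, f t) + ∫ t in β..T, f t) := by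
    rw [integral_add_adjacent_intervals h2 h3, integral_add_adjacent_intervals h1 (h2.trans h3)]
  have hA : 0 ≤ ∫ t in (0:ℝ)..α, f t := by
    apply intervalIntegral.integral_nonneg (le_max_left 0 _)
    intro u hu
    exact h0 u ⟨hu.1, le_trans hu.2 (by rw [max_le_iff]; constructor <;> linarith)⟩
  have hC : 0 ≤ ∫ t in β..T, f t := by
    apply intervalIntegral.integral_nonneg (min_le_left T _)
    intro u hu
    exact h0 u ⟨le_trans (le_trans (le_max_left 0 _) hαβ.le) hu.1, hu.2⟩
  have hB : (f t₀ / 2) * (β - α) ≤ ∫ t in α..β, f t := by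
    have hmono := intervalIntegral.integral_mono_on hαβ.le
      (_root_.intervalIntegrable_const (c := f t₀ / 2)) h2
      (fun y hy => by
        apply le_of_lt
        apply hev y (hsub hy)
        rw [Real.dist_eq, abs_sub_lt_iff]
        have h1' : α ≥ t₀ - δ/2 := le_max_right _ _
        have h2' : β ≤ t₀ + δ/2 := min_le_right _ _
        constructor <;> [linarith [hy.2]; linarith [hy.1]])
    calc (f t₀ / 2) * (β - α) = (β - α) * f t₀ / 2 := by ring
      _ ≤ _ := by simpa using hmono
  have : 0 < (f t₀ / 2) * (β - α) := by
    apply mul_pos (by linarith) (by linarith)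
  rw [hsplit]
  linarith

lemma aux_strict_fderiv {T : ℝ} (hT : 0 < T) {u z K K' : ℝ → ℝ}
    (hu : ContinuousOn u (Set.Icc 0 T)) (hz : ContinuousOn z (Set.Icc 0 T))
    (hK : ∀ x, HasDerivAt K (K' x) x) (hK' : Continuous K') :
    HasStrictFDerivAt (fun sc : ℝ × ℝ => ∫ t in (0:ℝ)..T, K (u t + sc.1 * z t + sc.2))
      ((∫ t in (0:ℝ)..T, K' (u t) * z t) • ContinuousLinearMap.fst ℝ ℝ ℝ
        + (∫ t in (0:ℝ)..T, K' (u t)) • ContinuousLinearMap.snd ℝ ℝ ℝ) ((0 : ℝ), (0 : ℝ)) := by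
  have hKc : Continuous K := by
    rw [continuous_iff_continuousAt]; exact fun x => (hK x).continuousAt
  have hii : ∀ {f : ℝ → ℝ}, ContinuousOn f (Set.Icc 0 T) →
      IntervalIntegrable f volume 0 T := by
    intro f hf
    apply ContinuousOn.intervalIntegrable
    rwa [Set.uIcc_of_le hT.le]
  obtain ⟨Mu, hMu⟩ := isCompact_Icc.exists_bound_of_continuousOn hu
  obtain ⟨Mz, hMz⟩ := isCompact_Icc.exists_bound_of_continuousOn hz
  have hMu0 : 0 ≤ Mu := le_trans (norm_nonneg _) (hMu 0 ⟨le_rfl, hT.le⟩)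
  have hMz0 : 0 ≤ Mz := le_trans (norm_nonneg _) (hMz 0 ⟨le_rfl, hT.le⟩)
  set R : ℝ := Mu + Mz + 2 with hR
  have huc := (isCompact_Icc (a := -R) (b := R)).uniformContinuousOn_of_continuous
    hK'.continuousOn
  rw [Metric.uniformContinuousOn_iff] at huc
  refine HasStrictFDerivAt.of_isLittleO ?_
  rw [Asymptotics.isLittleO_iff]
  intro ε hε
  set ε' := ε / ((Mz + 1) * (T + 1)) with hε'def
  have hε' : 0 < ε' := by positivity
  obtain ⟨δ, hδpos, hδ⟩ := huc ε' hε'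
  set δ' := min δ 1 with hδ'def
  have hδ'pos : 0 < δ' := lt_min hδpos one_pos
  have hδ'1 : δ' ≤ 1 := min_le_right _ _
  have hδ'δ : δ' ≤ δ := min_le_left _ _
  set ρ := δ' / (2 * (Mz + 1)) with hρdef
  have hρ : 0 < ρ := by positivity
  have hρδ : ρ * (Mz + 1) = δ' / 2 := by
    rw [hρdef]; field_simp
  filter_upwards [Metric.ball_mem_nhds ((((0:ℝ),(0:ℝ)),((0:ℝ),(0:ℝ)))) hρ] with pq hpq
  obtain ⟨⟨s₁, c₁⟩, s₂, c₂⟩ := pq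
  simp only [Metric.mem_ball, Prod.dist_eq, Real.dist_eq, sub_zero, max_lt_iff] at hpq
  obtain ⟨⟨hs₁, hc₁⟩, hs₂, hc₂⟩ := hpq
  set nΔ := ‖((s₁, c₁) : ℝ × ℝ) - (s₂, c₂)‖ with hnΔdef
  have hnΔ0 : 0 ≤ nΔ := norm_nonneg _
  have hnΔ1 : |s₁ - s₂| ≤ nΔ := by
    have := norm_fst_le (((s₁, c₁) : ℝ × ℝ) - (s₂, c₂))
    exact this
  have hnΔ2 : |c₁ - c₂| ≤ nΔ := by
    have := norm_snd_le (((s₁, c₁) : ℝ × ℝ) - (s₂, c₂))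
    exact this
  -- pointwise claim
  have claim : ∀ t ∈ Set.Icc (0:ℝ) T,
      |K (u t + s₁ * z t + c₁) - K (u t + s₂ * z t + c₂)
        - K' (u t) * ((s₁ - s₂) * z t + (c₁ - c₂))|
        ≤ ε' * ((Mz + 1) * nΔ) := by
    intro t ht
    have hzb : |z t| ≤ Mz := by have := hMz t ht; rwa [Real.norm_eq_abs] at this
    have hub : |u t| ≤ Mu := by have := hMu t ht; rwa [Real.norm_eq_abs] at this
    have habs1 : |s₁ * z t + c₁| ≤ δ' / 2 := by
      have h1 : |s₁ * z t + c₁| ≤ |s₁| * |z t| + |c₁| := by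
        refine (abs_add_le _ _).trans ?_
        rw [abs_mul]
      have h2 : |s₁| * |z t| ≤ ρ * Mz :=
        mul_le_mul hs₁.le hzb (abs_nonneg _) hρ.le
      nlinarith [hρδ]
    have habs2 : |s₂ * z t + c₂| ≤ δ' / 2 := by
      have h1 : |s₂ * z t + c₂| ≤ |s₂| * |z t| + |c₂| := by
        refine (abs_add_le _ _).trans ?_
        rw [abs_mul]
      have h2 : |s₂| * |z t| ≤ ρ * Mz :=
        mul_le_mul hs₂.le hzb (abs_nonneg _) hρ.le
      nlinarith [hρδ]
    have hKey : ∀ ξ ∈ Set.uIcc (u t + s₁ * z t + c₁) (u t + s₂ * z t + c₂),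
        |K' ξ - K' (u t)| ≤ ε' := by
      intro ξ hξ
      have hξu : |ξ - u t| ≤ δ' / 2 := by
        rw [abs_le] at habs1 habs2 ⊢
        rcases Set.mem_uIcc.1 hξ with ⟨ha, hb⟩ | ⟨ha, hb⟩ <;>
          constructor <;> linarith [habs1.1, habs1.2, habs2.1, habs2.2]
      have hξR : ξ ∈ Set.Icc (-R) R := by
        rw [abs_le] at hξu hub
        constructor <;> simp only [hR] <;> linarith
      have huR : u t ∈ Set.Icc (-R) R := by
        rw [abs_le] at hub
        constructor <;> simp only [hR] <;> linarith
      have hdist : dist ξ (u t) < δ := by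
        rw [Real.dist_eq]; linarith [abs_nonneg (ξ - u t)]
      have := hδ ξ hξR (u t) huR hdist
      rw [Real.dist_eq] at this
      exact this.le
    have htay := aux_taylor hK (u := u t) hKey
    have hdiff : (u t + s₁ * z t + c₁) - (u t + s₂ * z t + c₂)
        = (s₁ - s₂) * z t + (c₁ - c₂) := by ring
    rw [hdiff] at htay
    refine htay.trans ?_
    refine mul_le_mul_of_nonneg_left ?_ hε'.le
    have h1 : |(s₁ - s₂) * z t + (c₁ - c₂)| ≤ |s₁ - s₂| * |z t| + |c₁ - c₂| := by
      refine (abs_add_le _ _).trans ?_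
      rw [abs_mul]
    have h2 : |s₁ - s₂| * |z t| ≤ nΔ * Mz :=
      mul_le_mul hnΔ1 hzb (abs_nonneg _) hnΔ0
    nlinarith
  -- continuity facts
  have hv₁c : ContinuousOn (fun t => u t + s₁ * z t + c₁) (Set.Icc 0 T) :=
    (hu.add (continuousOn_const.mul hz)).add continuousOn_const
  have hv₂c : ContinuousOn (fun t => u t + s₂ * z t + c₂) (Set.Icc 0 T) :=
    (hu.add (continuousOn_const.mul hz)).add continuousOn_const
  have hIK1 : IntervalIntegrable (fun t => K (u t + s₁ * z t + c₁)) volume 0 T :=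
    hii (hKc.comp_continuousOn hv₁c)
  have hIK2 : IntervalIntegrable (fun t => K (u t + s₂ * z t + c₂)) volume 0 T :=
    hii (hKc.comp_continuousOn hv₂c)
  have hIKz : IntervalIntegrable (fun t => K' (u t) * z t) volume 0 T :=
    hii ((hK'.comp_continuousOn hu).mul hz)
  have hIKu : IntervalIntegrable (fun t => K' (u t)) volume 0 T :=
    hii (hK'.comp_continuousOn hu)
  have hIL : IntervalIntegrable
      (fun t => K' (u t) * ((s₁ - s₂) * z t + (c₁ - c₂))) volume 0 T :=
    hii ((hK'.comp_continuousOn hu).mul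
      ((continuousOn_const.mul hz).add continuousOn_const))
  have hLeq : (∫ t in (0:ℝ)..T, K (u t + s₁ * z t + c₁))
      - (∫ t in (0:ℝ)..T, K (u t + s₂ * z t + c₂))
      - ((∫ t in (0:ℝ)..T, K' (u t) * z t) * (s₁ - s₂)
        + (∫ t in (0:ℝ)..T, K' (u t)) * (c₁ - c₂))
      = ∫ t in (0:ℝ)..T, (K (u t + s₁ * z t + c₁) - K (u t + s₂ * z t + c₂)
          - K' (u t) * ((s₁ - s₂) * z t + (c₁ - c₂))) := by
    rw [← intervalIntegral.integral_mul_const, ← intervalIntegral.integral_mul_const,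
      ← intervalIntegral.integral_add (hIKz.mul_const _) (hIKu.mul_const _),
      ← intervalIntegral.integral_sub hIK1 hIK2,
      ← intervalIntegral.integral_sub (hIK1.sub hIK2)
        ((hIKz.mul_const _).add (hIKu.mul_const _))]
    apply intervalIntegral.integral_congr
    intro t _
    dsimp only
    ring
  -- the goal
  have hbig : IntervalIntegrable
      (fun t => K (u t + s₁ * z t + c₁) - K (u t + s₂ * z t + c₂)
        - K' (u t) * ((s₁ - s₂) * z t + (c₁ - c₂))) volume 0 T :=
    (hIK1.sub hIK2).sub hIL
  have happL : ((∫ t in (0:ℝ)..T, K' (u t) * z t) • ContinuousLinearMap.fst ℝ ℝ ℝ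
        + (∫ t in (0:ℝ)..T, K' (u t)) • ContinuousLinearMap.snd ℝ ℝ ℝ)
        (((s₁, c₁) : ℝ × ℝ) - (s₂, c₂))
      = (∫ t in (0:ℝ)..T, K' (u t) * z t) * (s₁ - s₂)
        + (∫ t in (0:ℝ)..T, K' (u t)) * (c₁ - c₂) := by
    simp [ContinuousLinearMap.add_apply, ContinuousLinearMap.coe_smul',
      Pi.smul_apply, smul_eq_mul]
  calc ‖(fun sc : ℝ × ℝ => ∫ t in (0:ℝ)..T, K (u t + sc.1 * z t + sc.2)) (s₁, c₁)
        - (fun sc : ℝ × ℝ => ∫ t in (0:ℝ)..T, K (u t + sc.1 * z t + sc.2)) (s₂, c₂)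
        - ((∫ t in (0:ℝ)..T, K' (u t) * z t) • ContinuousLinearMap.fst ℝ ℝ ℝ
          + (∫ t in (0:ℝ)..T, K' (u t)) • ContinuousLinearMap.snd ℝ ℝ ℝ)
          (((s₁, c₁) : ℝ × ℝ) - (s₂, c₂))‖
      = |∫ t in (0:ℝ)..T, (K (u t + s₁ * z t + c₁) - K (u t + s₂ * z t + c₂)
          - K' (u t) * ((s₁ - s₂) * z t + (c₁ - c₂)))| := by
        simp only [happL, Real.norm_eq_abs]
        rw [hLeq]
    _ ≤ ∫ t in (0:ℝ)..T, |K (u t + s₁ * z t + c₁) - K (u t + s₂ * z t + c₂)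
          - K' (u t) * ((s₁ - s₂) * z t + (c₁ - c₂))| :=
        intervalIntegral.abs_integral_le_integral_abs hT.le
    _ ≤ ∫ _t in (0:ℝ)..T, ε' * ((Mz + 1) * nΔ) := by
        apply intervalIntegral.integral_mono_on hT.le hbig.abs
          intervalIntegrable_const
        intro t ht
        exact claim t ht
    _ = T * (ε' * ((Mz + 1) * nΔ)) := by
        rw [intervalIntegral.integral_const, smul_eq_mul, sub_zero]
    _ ≤ ε * nΔ := by
        have hX : ((Mz + 1) * (T + 1)) ≠ 0 := by positivity
        have hεε : ε' * ((Mz + 1) * (T + 1)) = ε := div_mul_cancel₀ ε hX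
        have hε2 : ε = ε' * (Mz + 1) * T + ε' * (Mz + 1) := by
          rw [← hεε]; ring
        have h2 : T * (ε' * (Mz + 1)) ≤ ε := by
          have := mul_nonneg hε'.le (by linarith : (0:ℝ) ≤ Mz + 1)
          linarith
        calc T * (ε' * ((Mz + 1) * nΔ)) = (T * (ε' * (Mz + 1))) * nΔ := by ring
          _ ≤ ε * nΔ := mul_le_mul_of_nonneg_right h2 hnΔ0



theorem stmt13 (T p : ℝ) (hT : 0 < T) (hp : 1 < p)
    (u₀ u₀' : ℝ → ℝ) (m : ℝ)
    (hderiv : ∀ t ∈ Set.Icc (0:ℝ) T, HasDerivWithinAt u₀ (u₀' t) (Set.Icc 0 T) t)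
    (hcont : ContinuousOn u₀' (Set.Icc 0 T))
    (hbc : u₀ 0 = u₀ T)
    (hconstr : (∫ t in (0:ℝ)..T, |u₀ t| ^ (2 / (p - 1)) * u₀ t) = 0)
    (hne : ∃ t ∈ Set.Icc (0:ℝ) T, u₀ t ≠ 0)
    (hm : m = (∫ t in (0:ℝ)..T, (u₀' t) ^ 2) /
      (∫ t in (0:ℝ)..T, |u₀ t| ^ (2 * p / (p - 1))) ^ ((p - 1) / p))
    (hmin : ∀ v v' : ℝ → ℝ,
      (∀ t ∈ Set.Icc (0:ℝ) T, HasDerivWithinAt v (v' t) (Set.Icc 0 T) t) →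
      ContinuousOn v' (Set.Icc 0 T) → v 0 = v T →
      (∫ t in (0:ℝ)..T, |v t| ^ (2 / (p - 1)) * v t) = 0 →
      (∃ t ∈ Set.Icc (0:ℝ) T, v t ≠ 0) →
      m ≤ (∫ t in (0:ℝ)..T, (v' t) ^ 2) /
        (∫ t in (0:ℝ)..T, |v t| ^ (2 * p / (p - 1))) ^ ((p - 1) / p)) :
    u₀' 0 = u₀' T ∧
    ∀ z z' : ℝ → ℝ,
      (∀ t ∈ Set.Icc (0:ℝ) T, HasDerivWithinAt z (z' t) (Set.Icc 0 T) t) →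
      ContinuousOn z' (Set.Icc 0 T) → z 0 = z T →
      (∫ t in (0:ℝ)..T, u₀' t * z' t) =
        (m * (∫ t in (0:ℝ)..T, |u₀ t| ^ (2 * p / (p - 1))) ^ (-(1:ℝ) / p)) *
          ∫ t in (0:ℝ)..T, |u₀ t| ^ (2 / (p - 1)) * u₀ t * z t := by
  have hp1 : (0:ℝ) < p - 1 := by linarith
  have hp0 : (0:ℝ) < p := by linarith
  set q : ℝ := 2 / (p - 1) with hqdef
  have hq : 0 < q := by positivity
  have hq2 : q + 2 = 2 * p / (p - 1) := by rw [hqdef]; field_simp; ring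
  rw [← hq2] at hm hmin ⊢
  have hii : ∀ {f : ℝ → ℝ}, ContinuousOn f (Set.Icc 0 T) →
      IntervalIntegrable f volume 0 T := by
    intro f hf
    apply ContinuousOn.intervalIntegrable
    rwa [Set.uIcc_of_le hT.le]
  have hu₀c : ContinuousOn u₀ (Set.Icc 0 T) := fun t ht => (hderiv t ht).continuousWithinAt
  obtain ⟨t₀, ht₀, hu₀t₀⟩ := hne
  have habs₀ : 0 < |u₀ t₀| := abs_pos.2 hu₀t₀
  set D0 : ℝ := ∫ t in (0:ℝ)..T, |u₀ t| ^ (q + 2) with hD0def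
  have hGcont : ContinuousOn (fun t => |u₀ t| ^ (q + 2)) (Set.Icc 0 T) :=
    (aux_cont_abs_rpow (by linarith : (0:ℝ) < q + 2)).comp_continuousOn hu₀c
  have hD0 : 0 < D0 := by
    rw [hD0def]
    exact aux_integral_pos hT hGcont
      (fun t _ => Real.rpow_nonneg (abs_nonneg _) _) ht₀
      (Real.rpow_pos_of_pos habs₀ _)
  have hD0κ : (0:ℝ) < D0 ^ ((p - 1) / p) := Real.rpow_pos_of_pos hD0 _
  have hm' : m * D0 ^ ((p - 1) / p) = ∫ t in (0:ℝ)..T, (u₀' t) ^ 2 := by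
    rw [hm, div_mul_cancel₀ _ hD0κ.ne']
  have hFcont : ContinuousOn (fun t => |u₀ t| ^ q * u₀ t) (Set.Icc 0 T) :=
    ((aux_cont_abs_rpow hq).comp_continuousOn hu₀c).mul hu₀c
  have hQ0 : 0 < ∫ t in (0:ℝ)..T, (q + 1) * |u₀ t| ^ q := by
    apply aux_integral_pos hT
      (continuousOn_const.mul ((aux_cont_abs_rpow hq).comp_continuousOn hu₀c))
      (fun t _ => mul_nonneg (by linarith) (Real.rpow_nonneg (abs_nonneg _) _)) ht₀
    have := Real.rpow_pos_of_pos habs₀ q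
    exact mul_pos (by linarith) this
  -- The main Euler--Lagrange identity
  have EL : ∀ z z' : ℝ → ℝ,
      (∀ t ∈ Set.Icc (0:ℝ) T, HasDerivWithinAt z (z' t) (Set.Icc 0 T) t) →
      ContinuousOn z' (Set.Icc 0 T) → z 0 = z T →
      (∫ t in (0:ℝ)..T, u₀' t * z' t)
        = (m * D0 ^ (-(1:ℝ) / p)) * ∫ t in (0:ℝ)..T, |u₀ t| ^ q * u₀ t * z t := by
    intro z z' hdz hcz hbz
    have hzc : ContinuousOn z (Set.Icc 0 T) := fun t ht => (hdz t ht).continuousWithinAt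
    -- strict derivatives of the two integral functionals
    have hgS : HasStrictFDerivAt
        (fun sc : ℝ × ℝ => ∫ t in (0:ℝ)..T,
          |u₀ t + sc.1 * z t + sc.2| ^ q * (u₀ t + sc.1 * z t + sc.2))
        ((∫ t in (0:ℝ)..T, (q + 1) * |u₀ t| ^ q * z t) • ContinuousLinearMap.fst ℝ ℝ ℝ
          + (∫ t in (0:ℝ)..T, (q + 1) * |u₀ t| ^ q) • ContinuousLinearMap.snd ℝ ℝ ℝ)
        ((0 : ℝ), (0 : ℝ)) :=
      aux_strict_fderiv hT hu₀c hzc (aux_hasDerivAt_F hq)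
        (continuous_const.mul (aux_cont_abs_rpow hq))
    have hDS : HasStrictFDerivAt
        (fun sc : ℝ × ℝ => ∫ t in (0:ℝ)..T, |u₀ t + sc.1 * z t + sc.2| ^ (q + 2))
        ((∫ t in (0:ℝ)..T, (q + 2) * (|u₀ t| ^ q * u₀ t) * z t) • ContinuousLinearMap.fst ℝ ℝ ℝ
          + (∫ t in (0:ℝ)..T, (q + 2) * (|u₀ t| ^ q * u₀ t)) • ContinuousLinearMap.snd ℝ ℝ ℝ)
        ((0 : ℝ), (0 : ℝ)) :=
      aux_strict_fderiv hT hu₀c hzc (aux_hasDerivAt_G hq)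
        (continuous_const.mul ((aux_cont_abs_rpow hq).mul continuous_id))
    have hD00 : (fun sc : ℝ × ℝ => ∫ t in (0:ℝ)..T,
        |u₀ t + sc.1 * z t + sc.2| ^ (q + 2)) ((0:ℝ), (0:ℝ)) = D0 := by
      show (∫ t in (0:ℝ)..T, |u₀ t + 0 * z t + 0| ^ (q + 2)) = D0
      rw [hD0def]
      apply intervalIntegral.integral_congr
      intro t _
      norm_num
    have hrpow : HasStrictDerivAt (fun y : ℝ => y ^ ((p - 1) / p))
        (((p - 1) / p) * D0 ^ ((p - 1) / p - 1))
        ((fun sc : ℝ × ℝ => ∫ t in (0:ℝ)..T,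
          |u₀ t + sc.1 * z t + sc.2| ^ (q + 2)) ((0:ℝ), (0:ℝ))) := by
      rw [hD00]
      exact Real.hasStrictDerivAt_rpow_const (Or.inl hD0.ne')
    have hDκS := (hrpow.comp_hasStrictFDerivAt ((0:ℝ), (0:ℝ)) hDS).const_mul m
    -- the numerator functional is a polynomial in s
    have hiu2 : IntervalIntegrable (fun t => (u₀' t) ^ 2) volume 0 T :=
      hii (hcont.pow 2)
    have hiuz : IntervalIntegrable (fun t => u₀' t * z' t) volume 0 T :=
      hii (hcont.mul hcz)
    have hiz2 : IntervalIntegrable (fun t => (z' t) ^ 2) volume 0 T :=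
      hii (hcz.pow 2)
    have hNs : ∀ s : ℝ, (∫ t in (0:ℝ)..T, (u₀' t + s * z' t) ^ 2)
        = (∫ t in (0:ℝ)..T, (u₀' t) ^ 2)
          + 2 * (∫ t in (0:ℝ)..T, u₀' t * z' t) * s
          + (∫ t in (0:ℝ)..T, (z' t) ^ 2) * (s * s) := by
      intro s
      have h1 : (∫ t in (0:ℝ)..T, (u₀' t + s * z' t) ^ 2)
          = ∫ t in (0:ℝ)..T, ((u₀' t) ^ 2 + (2 * s) * (u₀' t * z' t) + (s * s) * (z' t) ^ 2) := by
        apply intervalIntegral.integral_congr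
        intro t _
        dsimp only
        ring
      rw [h1, intervalIntegral.integral_add (hiu2.add ((hiuz.const_mul _)))
          (hiz2.const_mul _),
        intervalIntegral.integral_add hiu2 (hiuz.const_mul _),
        intervalIntegral.integral_const_mul, intervalIntegral.integral_const_mul]
      ring
    have hfst : HasStrictFDerivAt (fun sc : ℝ × ℝ => sc.1)
        (ContinuousLinearMap.fst ℝ ℝ ℝ) ((0:ℝ), (0:ℝ)) :=
      (ContinuousLinearMap.fst ℝ ℝ ℝ).hasStrictFDerivAt
    have hNpoly := ((hasStrictFDerivAt_const (∫ t in (0:ℝ)..T, (u₀' t) ^ 2)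
        (((0:ℝ), (0:ℝ)) : ℝ × ℝ)).add
        (hfst.const_mul (2 * ∫ t in (0:ℝ)..T, u₀' t * z' t))).add
        ((hfst.mul hfst).const_mul (∫ t in (0:ℝ)..T, (z' t) ^ 2))
    have hNS : HasStrictFDerivAt
        (fun sc : ℝ × ℝ => ∫ t in (0:ℝ)..T, (u₀' t + sc.1 * z' t) ^ 2)
        ((0 : (ℝ × ℝ) →L[ℝ] ℝ)
          + (2 * ∫ t in (0:ℝ)..T, u₀' t * z' t) • ContinuousLinearMap.fst ℝ ℝ ℝ
          + (∫ t in (0:ℝ)..T, (z' t) ^ 2) •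
            ((((0:ℝ), (0:ℝ)) : ℝ × ℝ).1 • ContinuousLinearMap.fst ℝ ℝ ℝ
              + (((0:ℝ), (0:ℝ)) : ℝ × ℝ).1 • ContinuousLinearMap.fst ℝ ℝ ℝ))
        ((0:ℝ), (0:ℝ)) := by
      apply HasStrictFDerivAt.congr_of_eventuallyEq hNpoly
      filter_upwards with sc
      rw [hNs sc.1]; rfl
    have hhS := hNS.sub hDκS
    -- local minimality on the constraint set
    have hg00 : (fun sc : ℝ × ℝ => ∫ t in (0:ℝ)..T,
        |u₀ t + sc.1 * z t + sc.2| ^ q * (u₀ t + sc.1 * z t + sc.2)) ((0:ℝ), (0:ℝ)) = 0 := by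
      show (∫ t in (0:ℝ)..T, |u₀ t + 0 * z t + 0| ^ q * (u₀ t + 0 * z t + 0)) = 0
      have heq : (∫ t in (0:ℝ)..T, |u₀ t + 0 * z t + 0| ^ q * (u₀ t + 0 * z t + 0))
          = ∫ t in (0:ℝ)..T, |u₀ t| ^ q * u₀ t := by
        apply intervalIntegral.integral_congr
        intro t _
        norm_num
      rw [heq, hconstr]
    set P₂ : ℝ := ∫ t in (0:ℝ)..T, |u₀ t| ^ q * u₀ t * z t with hP₂def
    set B : ℝ := ∫ t in (0:ℝ)..T, u₀' t * z' t with hBdef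
    set δ₀ : ℝ := |u₀ t₀| / (2 * (|z t₀| + 1)) with hδ₀def
    have hδ₀ : 0 < δ₀ := by positivity
    have hδ₀z : δ₀ * (|z t₀| + 1) = |u₀ t₀| / 2 := by
      rw [hδ₀def]; field_simp
    have hextr : IsLocalExtrOn
        (fun sc : ℝ × ℝ => (∫ t in (0:ℝ)..T, (u₀' t + sc.1 * z' t) ^ 2)
          - m * (∫ t in (0:ℝ)..T, |u₀ t + sc.1 * z t + sc.2| ^ (q + 2)) ^ ((p - 1) / p))
        {sc : ℝ × ℝ | (fun sc : ℝ × ℝ => ∫ t in (0:ℝ)..T,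
          |u₀ t + sc.1 * z t + sc.2| ^ q * (u₀ t + sc.1 * z t + sc.2)) sc
          = (fun sc : ℝ × ℝ => ∫ t in (0:ℝ)..T,
          |u₀ t + sc.1 * z t + sc.2| ^ q * (u₀ t + sc.1 * z t + sc.2)) ((0:ℝ),(0:ℝ))}
        ((0:ℝ), (0:ℝ)) := by
      have hmem : Metric.ball (((0:ℝ),(0:ℝ)) : ℝ × ℝ) δ₀ ∈
          𝓝[{sc : ℝ × ℝ | (fun sc : ℝ × ℝ => ∫ t in (0:ℝ)..T,
          |u₀ t + sc.1 * z t + sc.2| ^ q * (u₀ t + sc.1 * z t + sc.2)) sc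
          = (fun sc : ℝ × ℝ => ∫ t in (0:ℝ)..T,
          |u₀ t + sc.1 * z t + sc.2| ^ q * (u₀ t + sc.1 * z t + sc.2)) ((0:ℝ),(0:ℝ))}]
          (((0:ℝ),(0:ℝ)) : ℝ × ℝ) :=
        mem_nhdsWithin_of_mem_nhds (Metric.ball_mem_nhds _ hδ₀)
      refine Or.inl (Filter.eventually_of_mem
        (Filter.inter_mem hmem self_mem_nhdsWithin) ?_)
      rintro sc ⟨hscB, hscS⟩
      have hconstr' : (∫ t in (0:ℝ)..T,
          |u₀ t + sc.1 * z t + sc.2| ^ q * (u₀ t + sc.1 * z t + sc.2)) = 0 := by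
        have h := hscS
        rw [Set.mem_setOf_eq] at h
        exact h.trans hg00
      rw [Metric.mem_ball, Prod.dist_eq, Real.dist_eq, Real.dist_eq, max_lt_iff,
        sub_zero, sub_zero] at hscB
      have hvt₀ : u₀ t₀ + sc.1 * z t₀ + sc.2 ≠ 0 := by
        have h1 : |sc.1 * z t₀ + sc.2| ≤ |sc.1| * |z t₀| + |sc.2| :=
          (abs_add_le _ _).trans (by rw [abs_mul])
        have h2 : |sc.1| * |z t₀| ≤ δ₀ * |z t₀| :=
          mul_le_mul_of_nonneg_right hscB.1.le (abs_nonneg _)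
        have h4 : |sc.1 * z t₀ + sc.2| < |u₀ t₀| := by nlinarith [hscB.2, abs_nonneg (u₀ t₀)]
        intro hcontra
        have h5 : sc.1 * z t₀ + sc.2 = -u₀ t₀ := by linarith
        rw [h5, abs_neg] at h4
        exact lt_irrefl _ h4
      have hvcont : ContinuousOn (fun t => u₀ t + sc.1 * z t + sc.2) (Set.Icc 0 T) :=
        (hu₀c.add (continuousOn_const.mul hzc)).add continuousOn_const
      have hDsc : 0 < ∫ t in (0:ℝ)..T, |u₀ t + sc.1 * z t + sc.2| ^ (q + 2) :=
        aux_integral_pos hT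
          ((aux_cont_abs_rpow (by linarith : (0:ℝ) < q + 2)).comp_continuousOn hvcont)
          (fun t _ => Real.rpow_nonneg (abs_nonneg _) _) ht₀
          (Real.rpow_pos_of_pos (abs_pos.2 hvt₀) _)
      have happ := hmin (fun t => u₀ t + sc.1 * z t + sc.2)
        (fun t => u₀' t + sc.1 * z' t)
        (fun t ht => ((hderiv t ht).add ((hdz t ht).const_mul sc.1)).add_const sc.2)
        (hcont.add (continuousOn_const.mul hcz))
        (by rw [hbc, hbz])
        hconstr'
        ⟨t₀, ht₀, hvt₀⟩
      have hstep : m * (∫ t in (0:ℝ)..T,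
          |u₀ t + sc.1 * z t + sc.2| ^ (q + 2)) ^ ((p - 1) / p)
          ≤ ∫ t in (0:ℝ)..T, (u₀' t + sc.1 * z' t) ^ 2 := by
        rw [← le_div_iff₀ (Real.rpow_pos_of_pos hDsc _)]
        exact happ
      show (∫ t in (0:ℝ)..T, (u₀' t + (0:ℝ) * z' t) ^ 2)
          - m * (∫ t in (0:ℝ)..T, |u₀ t + (0:ℝ) * z t + (0:ℝ)| ^ (q + 2)) ^ ((p - 1) / p)
          ≤ (∫ t in (0:ℝ)..T, (u₀' t + sc.1 * z' t) ^ 2)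
          - m * (∫ t in (0:ℝ)..T, |u₀ t + sc.1 * z t + sc.2| ^ (q + 2)) ^ ((p - 1) / p)
      have hD00' : (∫ t in (0:ℝ)..T, |u₀ t + (0:ℝ) * z t + (0:ℝ)| ^ (q + 2)) = D0 := hD00
      rw [hNs 0, hD00']
      have := hm'
      linarith [hstep]
    obtain ⟨aℓ, bℓ, habℓ, hsum⟩ :=
      hextr.exists_multipliers_of_hasStrictFDerivAt_1d hgS hhS
    have hLD2 : (∫ t in (0:ℝ)..T, (q + 2) * (|u₀ t| ^ q * u₀ t)) = 0 := by
      rw [intervalIntegral.integral_const_mul, hconstr, mul_zero]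
    have hLD1 : (∫ t in (0:ℝ)..T, (q + 2) * (|u₀ t| ^ q * u₀ t) * z t) = (q + 2) * P₂ := by
      rw [hP₂def, ← intervalIntegral.integral_const_mul]
      apply intervalIntegral.integral_congr
      intro t _
      dsimp only
      ring
    have e1 := DFunLike.congr_fun hsum ((0:ℝ), (1:ℝ))
    have e2 := DFunLike.congr_fun hsum ((1:ℝ), (0:ℝ))
    simp only [ContinuousLinearMap.add_apply, ContinuousLinearMap.coe_smul',
      Pi.smul_apply, ContinuousLinearMap.coe_fst', ContinuousLinearMap.coe_snd',
      smul_eq_mul, ContinuousLinearMap.zero_apply, ContinuousLinearMap.sub_apply,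
      mul_one, mul_zero, add_zero, zero_add, zero_mul, hLD1, hLD2] at e1 e2
    have haℓ : aℓ = 0 := by
      have h : aℓ * ∫ (t : ℝ) in (0:ℝ)..T, (q + 1) * |u₀ t| ^ q = 0 := by linarith
      exact (mul_eq_zero.1 h).resolve_right hQ0.ne'
    have hbℓ : bℓ ≠ 0 := by
      intro hb
      apply habℓ
      rw [haℓ, hb]
      rfl
    rw [haℓ, zero_mul, zero_add] at e2
    have hkey : 2 * B - m * ((p - 1) / p * D0 ^ ((p - 1) / p - 1) * ((q + 2) * P₂)) = 0 :=
      (mul_eq_zero.1 e2).resolve_left hbℓ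
    have hexp : (p - 1) / p - 1 = -(1:ℝ) / p := by
      field_simp; ring
    have hcoef : (p - 1) / p * (q + 2) = 2 := by
      rw [hq2]; field_simp
    rw [hexp] at hkey
    linear_combination hkey / 2 + (m * D0 ^ (-(1:ℝ) / p) * P₂ / 2) * hcoef
  constructor
  · -- periodicity of the derivative
    set lam : ℝ := m * D0 ^ (-(1:ℝ) / p) with hlamdef
    have hFint : IntervalIntegrable (fun σ => |u₀ σ| ^ q * u₀ σ) volume 0 T := hii hFcont
    set w : ℝ → ℝ := fun t => lam * ∫ σ in (0:ℝ)..t, |u₀ σ| ^ q * u₀ σ with hwdef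
    have hwd : ∀ t ∈ Set.Icc (0:ℝ) T,
        HasDerivWithinAt w (lam * (|u₀ t| ^ q * u₀ t)) (Set.Icc 0 T) t := by
      intro t ht
      haveI : Fact (t ∈ Set.Icc (0:ℝ) T) := ⟨ht⟩
      have hint : IntervalIntegrable (fun σ => |u₀ σ| ^ q * u₀ σ) volume 0 t := by
        apply hFint.mono_set
        rw [Set.uIcc_of_le ht.1, Set.uIcc_of_le hT.le]
        exact Set.Icc_subset_Icc le_rfl ht.2
      have hmeas : StronglyMeasurableAtFilter (fun σ => |u₀ σ| ^ q * u₀ σ)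
          (𝓝[Set.Icc (0:ℝ) T] t) :=
        hFcont.stronglyMeasurableAtFilter_nhdsWithin measurableSet_Icc t
      have h1 : HasDerivWithinAt (fun y => ∫ σ in (0:ℝ)..y, |u₀ σ| ^ q * u₀ σ)
          (|u₀ t| ^ q * u₀ t) (Set.Icc 0 T) t :=
        intervalIntegral.integral_hasDerivWithinAt_right hint hmeas (hFcont t ht)
      exact h1.const_mul lam
    have hw0 : w 0 = 0 := by
      show lam * (∫ σ in (0:ℝ)..(0:ℝ), |u₀ σ| ^ q * u₀ σ) = 0
      rw [intervalIntegral.integral_same, mul_zero]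
    have hwT : w T = 0 := by
      show lam * (∫ σ in (0:ℝ)..T, |u₀ σ| ^ q * u₀ σ) = 0
      rw [hconstr, mul_zero]
    have hwc : ContinuousOn w (Set.Icc 0 T) := fun t ht => (hwd t ht).continuousWithinAt
    have hGc : ContinuousOn (fun t => u₀' t + w t) (Set.Icc 0 T) := hcont.add hwc
    have hGint : IntervalIntegrable (fun t => u₀' t + w t) volume 0 T := hii hGc
    set cb : ℝ := (∫ t in (0:ℝ)..T, (u₀' t + w t)) / T with hcbdef
    have hGcbc : ContinuousOn (fun t => u₀' t + w t - cb) (Set.Icc 0 T) :=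
      hGc.sub continuousOn_const
    have hGcbint : IntervalIntegrable (fun t => u₀' t + w t - cb) volume 0 T := hii hGcbc
    have hintz : (∫ t in (0:ℝ)..T, (u₀' t + w t - cb)) = 0 := by
      rw [intervalIntegral.integral_sub hGint intervalIntegrable_const,
        intervalIntegral.integral_const, smul_eq_mul, hcbdef]
      field_simp; ring
    set zt : ℝ → ℝ := fun t => ∫ σ in (0:ℝ)..t, (u₀' σ + w σ - cb) with hztdef
    have hztd : ∀ t ∈ Set.Icc (0:ℝ) T,
        HasDerivWithinAt zt (u₀' t + w t - cb) (Set.Icc 0 T) t := by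
      intro t ht
      haveI : Fact (t ∈ Set.Icc (0:ℝ) T) := ⟨ht⟩
      have hint : IntervalIntegrable (fun σ => u₀' σ + w σ - cb) volume 0 t := by
        apply hGcbint.mono_set
        rw [Set.uIcc_of_le ht.1, Set.uIcc_of_le hT.le]
        exact Set.Icc_subset_Icc le_rfl ht.2
      have hmeas : StronglyMeasurableAtFilter (fun σ => u₀' σ + w σ - cb)
          (𝓝[Set.Icc (0:ℝ) T] t) :=
        hGcbc.stronglyMeasurableAtFilter_nhdsWithin measurableSet_Icc t
      exact intervalIntegral.integral_hasDerivWithinAt_right hint hmeas (hGcbc t ht)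
    have hztc : ContinuousOn zt (Set.Icc 0 T) := fun t ht => (hztd t ht).continuousWithinAt
    have hzt0 : zt 0 = 0 := by
      show (∫ σ in (0:ℝ)..(0:ℝ), (u₀' σ + w σ - cb)) = 0
      rw [intervalIntegral.integral_same]
    have hztT : zt T = 0 := hintz
    have hel : (∫ t in (0:ℝ)..T, u₀' t * (u₀' t + w t - cb))
        = lam * ∫ t in (0:ℝ)..T, |u₀ t| ^ q * u₀ t * zt t :=
      EL zt (fun t => u₀' t + w t - cb) hztd hGcbc (by rw [hzt0, hztT])
    -- FTC for the product w * zt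
    have hwzc : ContinuousOn (fun t => lam * (|u₀ t| ^ q * u₀ t) * zt t
        + w t * (u₀' t + w t - cb)) (Set.Icc 0 T) :=
      ((continuousOn_const.mul hFcont).mul hztc).add (hwc.mul hGcbc)
    have hwz : (∫ t in (0:ℝ)..T, (lam * (|u₀ t| ^ q * u₀ t) * zt t
        + w t * (u₀' t + w t - cb))) = 0 := by
      have hftc := intervalIntegral.integral_eq_sub_of_hasDeriv_right_of_le hT.le
        (f := fun t => w t * zt t)
        (f' := fun t => lam * (|u₀ t| ^ q * u₀ t) * zt t + w t * (u₀' t + w t - cb))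
        (hwc.mul hztc) ?_ (hii hwzc)
      · rw [hftc]
        simp only [hwT, hw0, zero_mul, sub_zero]
      · intro x hx
        have hxI : x ∈ Set.Icc (0:ℝ) T := Set.Ioo_subset_Icc_self hx
        have hnb : Set.Icc (0:ℝ) T ∈ 𝓝 x := Icc_mem_nhds hx.1 hx.2
        have hwAt : HasDerivAt w (lam * (|u₀ x| ^ q * u₀ x)) x :=
          (hwd x hxI).hasDerivAt hnb
        have hztAt : HasDerivAt zt (u₀' x + w x - cb) x :=
          (hztd x hxI).hasDerivAt hnb
        exact (hwAt.mul hztAt).hasDerivWithinAt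
    have hIlamF : IntervalIntegrable (fun t => lam * (|u₀ t| ^ q * u₀ t) * zt t) volume 0 T :=
      hii ((continuousOn_const.mul hFcont).mul hztc)
    have hIwG : IntervalIntegrable (fun t => w t * (u₀' t + w t - cb)) volume 0 T :=
      hii (hwc.mul hGcbc)
    have hsplit : (∫ t in (0:ℝ)..T, lam * (|u₀ t| ^ q * u₀ t) * zt t)
        + (∫ t in (0:ℝ)..T, w t * (u₀' t + w t - cb)) = 0 := by
      rw [← intervalIntegral.integral_add hIlamF hIwG]
      exact hwz
    have hlamP : (∫ t in (0:ℝ)..T, lam * (|u₀ t| ^ q * u₀ t) * zt t)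
        = lam * ∫ t in (0:ℝ)..T, |u₀ t| ^ q * u₀ t * zt t := by
      rw [← intervalIntegral.integral_const_mul]
      apply intervalIntegral.integral_congr
      intro t _
      dsimp only
      ring
    have hIuG : IntervalIntegrable (fun t => u₀' t * (u₀' t + w t - cb)) volume 0 T :=
      hii (hcont.mul hGcbc)
    have hGz : (∫ t in (0:ℝ)..T, (u₀' t + w t) * (u₀' t + w t - cb)) = 0 := by
      have hdecomp : (∫ t in (0:ℝ)..T, (u₀' t + w t) * (u₀' t + w t - cb))
          = (∫ t in (0:ℝ)..T, u₀' t * (u₀' t + w t - cb))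
            + ∫ t in (0:ℝ)..T, w t * (u₀' t + w t - cb) := by
        rw [← intervalIntegral.integral_add hIuG hIwG]
        apply intervalIntegral.integral_congr
        intro t _
        dsimp only
        ring
      rw [hdecomp, hel]
      rw [hlamP] at hsplit
      linarith
    have hsq : (∫ t in (0:ℝ)..T, (u₀' t + w t - cb) ^ 2) = 0 := by
      have hexpand : (∫ t in (0:ℝ)..T, (u₀' t + w t - cb) ^ 2)
          = (∫ t in (0:ℝ)..T, (u₀' t + w t) * (u₀' t + w t - cb))
            - cb * ∫ t in (0:ℝ)..T, (u₀' t + w t - cb) := by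
        rw [← intervalIntegral.integral_const_mul,
          ← intervalIntegral.integral_sub (hii (f := fun t => (u₀' t + w t) * (u₀' t + w t - cb)) (hGc.mul hGcbc)) (hGcbint.const_mul cb)]
        apply intervalIntegral.integral_congr
        intro t _
        dsimp only
        ring
      rw [hexpand, hGz, hintz, mul_zero, sub_zero]
    have hzero : ∀ t ∈ Set.Icc (0:ℝ) T, u₀' t + w t - cb = 0 := by
      intro t ht
      by_contra hne0
      have hpos : 0 < (u₀' t + w t - cb) ^ 2 := by positivity
      have hgt := aux_integral_pos hT (f := fun t => (u₀' t + w t - cb) ^ 2) (hGcbc.pow 2) (fun s _ => sq_nonneg _) ht hpos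
      rw [hsq] at hgt
      exact lt_irrefl 0 hgt
    have h0 := hzero 0 ⟨le_rfl, hT.le⟩
    have hTT := hzero T ⟨hT.le, le_rfl⟩
    rw [hw0] at h0
    rw [hwT] at hTT
    linarith
  · intro z z' h1 h2 h3
    exact EL z z' h1 h2 h3
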